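/- If G is a cycle-star graph on n vertices whose cycle has length 3 and G is not isomorphic to CS_{3,n−3}, then H_A(G) < H_A(CS_{3,n−3}). -/

import Mathlib

open Finset SimpleGraph

/-- Degree of a vertex (number of neighbors). -/
noncomputable def deg {V : Type*} [Fintype V] (G : SimpleGraph V) (v : V) : ℕ :=
  Nat.card {w // G.Adj v w}

open scoped Classical in
/-- Additively weighted Harary index: sum over unordered pairs of distinct
vertices of (deg u + deg v) / d(u,v). -/
noncomputable def HA {V : Type*} [Fintype V] (G : SimpleGraph V) : ℝ :=
  (1/2) * ∑ u : V, ∑ v : V, if u = v then 0 else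
    ((deg G u + deg G v : ℕ) : ℝ) / (G.dist u v)

/-- A unicyclic graph: connected with as many edges as vertices. -/
def Unicyclic {V : Type*} [Fintype V] (G : SimpleGraph V) : Prop :=
  G.Connected ∧ Nat.card G.edgeSet = Fintype.card V

/-- k-th harmonicNum number. -/
noncomputable def harmonicNum (k : ℕ) : ℝ := ∑ i ∈ Finset.range k, (1 : ℝ) / (i + 1)

/-- CS_{3,n-3}: a triangle on vertices 0,1,2 with n-3 leaves attached to vertex 0. -/
def cycleStar3 (n : ℕ) : SimpleGraph (Fin n) :=
  SimpleGraph.fromRel (fun i j => ((i : ℕ) < 3 ∧ (j : ℕ) < 3) ∨ ((i : ℕ) = 0 ∧ 3 ≤ (j : ℕ)))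

/-- CP_{k,n-k}: cycle 0,...,k-1 with the path k,k+1,...,n-1 attached to vertex 0
(for k = n this is just the cycle C_n). -/
def cyclePath (n k : ℕ) : SimpleGraph (Fin n) :=
  SimpleGraph.fromRel (fun i j =>
    ((i : ℕ) < k ∧ (j : ℕ) < k ∧ ((j : ℕ) = (i : ℕ) + 1 ∨ ((i : ℕ) = 0 ∧ (j : ℕ) = k - 1)))
    ∨ ((i : ℕ) = 0 ∧ (j : ℕ) = k)
    ∨ (k ≤ (i : ℕ) ∧ (j : ℕ) = (i : ℕ) + 1))

/-- A vertex lies on a cycle of G. -/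
def OnCycle {V : Type*} (G : SimpleGraph V) (v : V) : Prop :=
  ∃ p : G.Walk v v, p.IsCycle

/-- Cycle-star graph: unicyclic, and every vertex of degree ≥ 2 lies on the cycle
(equivalently, every non-cycle vertex is a leaf attached to a cycle vertex). -/
def IsCycleStar {V : Type*} [Fintype V] (G : SimpleGraph V) : Prop :=
  Unicyclic G ∧ ∀ v, 2 ≤ deg G v → OnCycle G v

/-- Cycle-path graph: unicyclic, cycle vertices have degree ≤ 3 and non-cycle
vertices have degree ≤ 2 (at most one pendant path per cycle vertex). -/
def IsCyclePath {V : Type*} [Fintype V] (G : SimpleGraph V) : Prop :=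
  Unicyclic G ∧ ∀ v, (OnCycle G v → deg G v ≤ 3) ∧ (¬ OnCycle G v → deg G v ≤ 2)

/-- Length of the unique cycle of a unicyclic graph: number of vertices on a cycle. -/
noncomputable def cycleLength {V : Type*} [Fintype V] (G : SimpleGraph V) : ℕ :=
  Nat.card {v // OnCycle G v}

/-- Value of H_A(CP_{3,n-3}). -/
noncomputable def CPval (n : ℕ) : ℝ :=
  4 * ∑ i ∈ Finset.range (n - 2), harmonicNum (n - i - 2)
    + harmonicNum (n - 3) + 3 * harmonicNum (n - 2) + (6 * (n : ℝ) - 13) / ((n : ℝ) - 2)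


open Finset SimpleGraph


open scoped Classical

namespace CS3Aux

/-- Structure data: triangle a,b,c with every other vertex a pendant leaf
attached via N. -/
structure Data {V : Type*} (G : SimpleGraph V) (a b c : V) (N : V → V) : Prop where
  hab : a ≠ b
  hac : a ≠ c
  hbc : b ≠ c
  hNT : ∀ v, ¬(v = a ∨ v = b ∨ v = c) → (N v = a ∨ N v = b ∨ N v = c)
  hadj : ∀ u v, G.Adj u v ↔
    ((u = a ∨ u = b ∨ u = c) ∧ (v = a ∨ v = b ∨ v = c) ∧ u ≠ v) ∨
    (¬(u = a ∨ u = b ∨ u = c) ∧ v = N u) ∨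
    (¬(v = a ∨ v = b ∨ v = c) ∧ u = N v)

variable {V : Type*} {G : SimpleGraph V} {a b c : V} {N : V → V}

lemma Data.rot (h : Data G a b c N) : Data G b c a N := by
  obtain ⟨hab, hac, hbc, hNT, hadj⟩ := h
  refine ⟨hbc, hab.symm, hac.symm, fun v hv => ?_, fun u v => ?_⟩
  · have := hNT v (by tauto); tauto
  · rw [hadj u v]; constructor <;> (intro h'; rcases h' with h'|h'|h' <;> [left; right;right] <;> tauto)

lemma Data.adj_T (h : Data G a b c N) {x y : V} (hx : x = a ∨ x = b ∨ x = c)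
    (hy : y = a ∨ y = b ∨ y = c) (hxy : x ≠ y) : G.Adj x y := by
  rw [h.hadj]; tauto

lemma Data.adj_leaf_iff (h : Data G a b c N) {u : V} (hu : ¬(u = a ∨ u = b ∨ u = c)) (w : V) :
    G.Adj u w ↔ w = N u := by
  rw [h.hadj]
  constructor
  · rintro (h'|h'|h')
    · tauto
    · exact h'.2
    · exact absurd (h'.2 ▸ h.hNT w h'.1) hu
  · intro h'; exact Or.inr (Or.inl ⟨hu, h'⟩)

lemma Data.adj_T_leaf_iff (h : Data G a b c N) {x v : V} (hx : x = a ∨ x = b ∨ x = c)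
    (hv : ¬(v = a ∨ v = b ∨ v = c)) : G.Adj x v ↔ N v = x := by
  rw [G.adj_comm, h.adj_leaf_iff hv]; exact eq_comm

lemma natcard_eq {V : Type*} [Fintype V] (P : V → Prop) [DecidablePred P] :
    Nat.card {v // P v} = (univ.filter P).card := by
  rw [Nat.card_eq_fintype_card]
  convert Fintype.card_subtype _

lemma deg_eq_card {V : Type*} [Fintype V] (G : SimpleGraph V) (v : V) :
    deg G v = (univ.filter (G.Adj v)).card := by
  rw [deg, Nat.card_eq_fintype_card]
  convert Fintype.card_subtype _

variable [Fintype V]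

lemma Data.deg_leaf (h : Data G a b c N) {u : V} (hu : ¬(u = a ∨ u = b ∨ u = c)) :
    deg G u = 1 := by
  rw [deg_eq_card]
  have : univ.filter (G.Adj u) = {N u} := by
    ext w; simp [h.adj_leaf_iff hu]
  rw [this, Finset.card_singleton]

lemma Data.deg_T (h : Data G a b c N) {x : V} (hx : x = a ∨ x = b ∨ x = c) :
    deg G x = 2 + (univ.filter (fun v => ¬(v = a ∨ v = b ∨ v = c) ∧ N v = x)).card := by
  rw [deg_eq_card]
  have hsplit : univ.filter (G.Adj x) =
      (({a, b, c} : Finset V).erase x) ∪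
        (univ.filter (fun v => ¬(v = a ∨ v = b ∨ v = c) ∧ N v = x)) := by
    ext w
    simp only [Finset.mem_filter, Finset.mem_univ, true_and, Finset.mem_union,
      Finset.mem_erase, Finset.mem_insert, Finset.mem_singleton]
    rw [h.hadj]
    constructor
    · rintro (h'|h'|h')
      · exact Or.inl ⟨h'.2.2.symm, h'.2.1⟩
      · exact absurd hx h'.1
      · exact Or.inr ⟨h'.1, h'.2.symm⟩
    · rintro (⟨hwx, hw⟩|⟨hw, hNw⟩)
      · exact Or.inl ⟨hx, hw, hwx.symm⟩
      · exact Or.inr (Or.inr ⟨hw, hNw.symm⟩)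
  rw [hsplit, Finset.card_union_of_disjoint, Finset.card_erase_of_mem]
  · have : ({a, b, c} : Finset V).card = 3 := by
      rw [Finset.card_insert_of_notMem (by simp [h.hab, h.hac]),
        Finset.card_insert_of_notMem (by simp [h.hbc]), Finset.card_singleton]
    omega
  · rcases hx with h'|h'|h' <;> simp [h']
  · rw [Finset.disjoint_left]
    rintro w hw hw'
    rw [Finset.mem_filter] at hw'
    apply hw'.2.1
    have := Finset.mem_of_mem_erase hw
    simpa using this

-- distance lemmas
lemma Data.dist_T (h : Data G a b c N) {x y : V} (hx : x = a ∨ x = b ∨ x = c)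
    (hy : y = a ∨ y = b ∨ y = c) (hxy : x ≠ y) : G.dist x y = 1 :=
  SimpleGraph.dist_eq_one_iff_adj.mpr (h.adj_T hx hy hxy)

lemma Data.dist_T_leaf_own (h : Data G a b c N) {x v : V} (hv : ¬(v = a ∨ v = b ∨ v = c))
    (hNv : N v = x) : G.dist x v = 1 :=
  SimpleGraph.dist_eq_one_iff_adj.mpr (by rw [G.adj_comm, h.adj_leaf_iff hv, hNv])

lemma Data.dist_T_leaf_other (h : Data G a b c N) {x v : V} (hx : x = a ∨ x = b ∨ x = c)
    (hv : ¬(v = a ∨ v = b ∨ v = c)) (hNv : N v ≠ x) : G.dist x v = 2 := by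
  have hxNv : G.Adj x (N v) := h.adj_T hx (h.hNT v hv) (fun h' => hNv h'.symm)
  have hNvv : G.Adj (N v) v := by rw [G.adj_comm, h.adj_leaf_iff hv]
  let w : G.Walk x v := .cons hxNv (.cons hNvv .nil)
  have h2 : G.dist x v ≤ 2 := by
    have := SimpleGraph.dist_le w
    simpa [w, SimpleGraph.Walk.length_cons] using this
  have h0 : G.dist x v ≠ 0 := by
    rw [SimpleGraph.dist_ne_zero_iff_ne_and_reachable]
    exact ⟨fun h' => hv (h' ▸ hx), ⟨w⟩⟩
  have h1 : G.dist x v ≠ 1 := by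
    rw [Ne, SimpleGraph.dist_eq_one_iff_adj, h.adj_T_leaf_iff hx hv]
    exact hNv
  omega

lemma Data.dist_leaf_same (h : Data G a b c N) {u v : V}
    (hu : ¬(u = a ∨ u = b ∨ u = c)) (hv : ¬(v = a ∨ v = b ∨ v = c))
    (huv : u ≠ v) (hNN : N u = N v) : G.dist u v = 2 := by
  have h1 : G.Adj u (N u) := by rw [h.adj_leaf_iff hu]
  have h2 : G.Adj (N u) v := by
    rw [h.adj_T_leaf_iff (h.hNT u hu) hv, hNN]
  let w : G.Walk u v := .cons h1 (.cons h2 .nil)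
  have hle : G.dist u v ≤ 2 := by
    have := SimpleGraph.dist_le w
    simpa [w, SimpleGraph.Walk.length_cons] using this
  have h0 : G.dist u v ≠ 0 := by
    rw [SimpleGraph.dist_ne_zero_iff_ne_and_reachable]
    exact ⟨huv, ⟨w⟩⟩
  have h1' : G.dist u v ≠ 1 := by
    rw [Ne, SimpleGraph.dist_eq_one_iff_adj, h.adj_leaf_iff hu]
    intro h'
    exact hv (h' ▸ h.hNT u hu)
  omega

lemma Data.dist_leaf_diff (h : Data G a b c N) {u v : V}
    (hu : ¬(u = a ∨ u = b ∨ u = c)) (hv : ¬(v = a ∨ v = b ∨ v = c))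
    (hNN : N u ≠ N v) : G.dist u v = 3 := by
  have huv : u ≠ v := fun h' => hNN (h' ▸ rfl)
  have h1 : G.Adj u (N u) := by rw [h.adj_leaf_iff hu]
  have h2 : G.Adj (N u) (N v) := h.adj_T (h.hNT u hu) (h.hNT v hv) hNN
  have h3 : G.Adj (N v) v := by rw [G.adj_comm, h.adj_leaf_iff hv]
  let w : G.Walk u v := .cons h1 (.cons h2 (.cons h3 .nil))
  have hle : G.dist u v ≤ 3 := by
    have := SimpleGraph.dist_le w
    simpa [w, SimpleGraph.Walk.length_cons] using this
  have h0 : G.dist u v ≠ 0 := by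
    rw [SimpleGraph.dist_ne_zero_iff_ne_and_reachable]
    exact ⟨huv, ⟨w⟩⟩
  have h1' : G.dist u v ≠ 1 := by
    rw [Ne, SimpleGraph.dist_eq_one_iff_adj, h.adj_leaf_iff hu]
    intro h'
    exact hv (h' ▸ h.hNT u hu)
  have h2' : G.dist u v ≠ 2 := by
    intro hd
    obtain ⟨p, hp⟩ := (SimpleGraph.Reachable.exists_walk_length_eq_dist (⟨w⟩ : G.Reachable u v))
    rw [hd] at hp
    have ha1 : G.Adj u (p.getVert 1) := by
      have := p.adj_getVert_succ (i := 0) (by omega)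
      simpa using this
    have ha2 : G.Adj (p.getVert 1) (p.getVert 2) := p.adj_getVert_succ (i := 1) (by omega)
    have hg2 : p.getVert 2 = v := by
      have := p.getVert_length
      rwa [hp] at this
    have hx : p.getVert 1 = N u := (h.adj_leaf_iff hu _).mp ha1
    rw [hx, hg2] at ha2
    rw [h.adj_T_leaf_iff (h.hNT u hu) hv] at ha2
    exact hNN ha2.symm
  omega

end CS3Aux

open Finset SimpleGraph
open scoped Classical

namespace CS3Aux
variable {V : Type*} {G : SimpleGraph V} {a b c : V} {N : V → V}

lemma Data.HA_formula [Fintype V] (h : Data G a b c N) (p q r : ℕ)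
    (hp : p = Nat.card {v : V // ¬(v = a ∨ v = b ∨ v = c) ∧ N v = a})
    (hq : q = Nat.card {v : V // ¬(v = a ∨ v = b ∨ v = c) ∧ N v = b})
    (hr : r = Nat.card {v : V // ¬(v = a ∨ v = b ∨ v = c) ∧ N v = c}) :
    HA G = (3/2) * ((p:ℝ) + q + r)^2 + (15/2) * ((p:ℝ) + q + r) + 12
      - (4/3) * ((p:ℝ) * q + (q:ℝ) * r + (r:ℝ) * p) := by
  rw [natcard_eq] at hp hq hr
  set A := univ.filter (fun v => ¬(v = a ∨ v = b ∨ v = c) ∧ N v = a) with hA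
  set B := univ.filter (fun v => ¬(v = a ∨ v = b ∨ v = c) ∧ N v = b) with hB
  set C := univ.filter (fun v => ¬(v = a ∨ v = b ∨ v = c) ∧ N v = c) with hC
  set F : V → V → ℝ := fun u v => if u = v then 0 else
    ((deg G u + deg G v : ℕ) : ℝ) / (G.dist u v) with hF
  have hHA : HA G = 1/2 * ∑ u : V, ∑ v : V, F u v := rfl
  -- membership lemmas
  have memA : ∀ v, v ∈ A ↔ (¬(v = a ∨ v = b ∨ v = c) ∧ N v = a) := by
    intro v; rw [hA, Finset.mem_filter]; simp
  have memB : ∀ v, v ∈ B ↔ (¬(v = a ∨ v = b ∨ v = c) ∧ N v = b) := by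
    intro v; rw [hB, Finset.mem_filter]; simp
  have memC : ∀ v, v ∈ C ↔ (¬(v = a ∨ v = b ∨ v = c) ∧ N v = c) := by
    intro v; rw [hC, Finset.mem_filter]; simp
  -- partition of univ
  have hcover : (univ : Finset V) = insert a (insert b (insert c (A ∪ B ∪ C))) := by
    ext v
    simp only [Finset.mem_univ, true_iff, Finset.mem_insert, Finset.mem_union]
    by_cases hv : v = a ∨ v = b ∨ v = c
    · tauto
    · rcases h.hNT v hv with h'|h'|h'
      · exact Or.inr (Or.inr (Or.inr (Or.inl (Or.inl ((memA v).mpr ⟨hv, h'⟩)))))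
      · exact Or.inr (Or.inr (Or.inr (Or.inl (Or.inr ((memB v).mpr ⟨hv, h'⟩)))))
      · exact Or.inr (Or.inr (Or.inr (Or.inr ((memC v).mpr ⟨hv, h'⟩))))
  have hanot : a ∉ insert b (insert c (A ∪ B ∪ C)) := by
    simp only [Finset.mem_insert, Finset.mem_union]
    rintro (h'|h'|(h'|h')|h')
    · exact h.hab h'
    · exact h.hac h'
    · exact ((memA a).mp h').1 (Or.inl rfl)
    · exact ((memB a).mp h').1 (Or.inl rfl)
    · exact ((memC a).mp h').1 (Or.inl rfl)
  have hbnot : b ∉ insert c (A ∪ B ∪ C) := by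
    simp only [Finset.mem_insert, Finset.mem_union]
    rintro (h'|(h'|h')|h')
    · exact h.hbc h'
    · exact ((memA b).mp h').1 (Or.inr (Or.inl rfl))
    · exact ((memB b).mp h').1 (Or.inr (Or.inl rfl))
    · exact ((memC b).mp h').1 (Or.inr (Or.inl rfl))
  have hcnot : c ∉ A ∪ B ∪ C := by
    simp only [Finset.mem_union]
    rintro ((h'|h')|h')
    · exact ((memA c).mp h').1 (Or.inr (Or.inr rfl))
    · exact ((memB c).mp h').1 (Or.inr (Or.inr rfl))
    · exact ((memC c).mp h').1 (Or.inr (Or.inr rfl))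
  have hdAB : Disjoint A B := by
    rw [Finset.disjoint_left]
    intro v hv hv'
    have h1 := (memA v).mp hv
    have h2 := (memB v).mp hv'
    exact h.hab (h1.2 ▸ h2.2 ▸ rfl)
  have hdAC : Disjoint A C := by
    rw [Finset.disjoint_left]
    intro v hv hv'
    have h1 := (memA v).mp hv
    have h2 := (memC v).mp hv'
    exact h.hac (h1.2 ▸ h2.2 ▸ rfl)
  have hdBC : Disjoint B C := by
    rw [Finset.disjoint_left]
    intro v hv hv'
    have h1 := (memB v).mp hv
    have h2 := (memC v).mp hv'
    exact h.hbc (h1.2 ▸ h2.2 ▸ rfl)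
  have hsum : ∀ g : V → ℝ, ∑ v : V, g v
      = g a + g b + g c + ((∑ v ∈ A, g v) + (∑ v ∈ B, g v) + (∑ v ∈ C, g v)) := by
    intro g
    rw [hcover, Finset.sum_insert hanot, Finset.sum_insert hbnot, Finset.sum_insert hcnot,
      Finset.sum_union (by exact Finset.disjoint_union_left.mpr ⟨hdAC, hdBC⟩),
      Finset.sum_union hdAB]
    ring
  -- degrees
  have hdega : deg G a = 2 + p := by rw [h.deg_T (Or.inl rfl), hp]
  have hdegb : deg G b = 2 + q := by rw [h.deg_T (Or.inr (Or.inl rfl)), hq]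
  have hdegc : deg G c = 2 + r := by rw [h.deg_T (Or.inr (Or.inr rfl)), hr]

  -- generic facts
  have hTa : a = a ∨ a = b ∨ a = c := Or.inl rfl
  have hTb : b = a ∨ b = b ∨ b = c := Or.inr (Or.inl rfl)
  have hTc : c = a ∨ c = b ∨ c = c := Or.inr (Or.inr rfl)
  -- row sums for triangle vertices
  have hSa : ∑ v : V, F a v =
      ((p:ℝ)+(q:ℝ)+4) + ((p:ℝ)+(r:ℝ)+4) + (p:ℝ)*((p:ℝ)+3)
        + (q:ℝ)*(((p:ℝ)+3)/2) + (r:ℝ)*(((p:ℝ)+3)/2) := by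
    rw [hsum]
    have h1 : F a a = 0 := if_pos rfl
    have h2 : F a b = (p:ℝ)+(q:ℝ)+4 := by
      simp only [hF]
      rw [if_neg h.hab, h.dist_T hTa hTb h.hab, hdega, hdegb]; push_cast; norm_num; try ring
    have h3 : F a c = (p:ℝ)+(r:ℝ)+4 := by
      simp only [hF]
      rw [if_neg h.hac, h.dist_T hTa hTc h.hac, hdega, hdegc]; push_cast; norm_num; try ring
    have h4 : ∑ v ∈ A, F a v = (p:ℝ)*((p:ℝ)+3) := by
      have key : ∀ v ∈ A, F a v = (p:ℝ)+3 := by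
        intro v hv
        obtain ⟨hv1, hv2⟩ := (memA v).mp hv
        have hne : a ≠ v := fun h' => hv1 (Or.inl h'.symm)
        simp only [hF]
        rw [if_neg hne, h.dist_T_leaf_own hv1 hv2, h.deg_leaf hv1, hdega]
        push_cast; norm_num; try ring
      rw [Finset.sum_congr rfl key, Finset.sum_const, ← hp, nsmul_eq_mul]
    have h5 : ∑ v ∈ B, F a v = (q:ℝ)*(((p:ℝ)+3)/2) := by
      have key : ∀ v ∈ B, F a v = ((p:ℝ)+3)/2 := by
        intro v hv
        obtain ⟨hv1, hv2⟩ := (memB v).mp hv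
        have hne : a ≠ v := fun h' => hv1 (Or.inl h'.symm)
        simp only [hF]
        rw [if_neg hne, h.dist_T_leaf_other hTa hv1 (by rw [hv2]; exact h.hab.symm),
          h.deg_leaf hv1, hdega]
        push_cast; norm_num; try ring
      rw [Finset.sum_congr rfl key, Finset.sum_const, ← hq, nsmul_eq_mul]
    have h6 : ∑ v ∈ C, F a v = (r:ℝ)*(((p:ℝ)+3)/2) := by
      have key : ∀ v ∈ C, F a v = ((p:ℝ)+3)/2 := by
        intro v hv
        obtain ⟨hv1, hv2⟩ := (memC v).mp hv
        have hne : a ≠ v := fun h' => hv1 (Or.inl h'.symm)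
        simp only [hF]
        rw [if_neg hne, h.dist_T_leaf_other hTa hv1 (by rw [hv2]; exact h.hac.symm),
          h.deg_leaf hv1, hdega]
        push_cast; norm_num; try ring
      rw [Finset.sum_congr rfl key, Finset.sum_const, ← hr, nsmul_eq_mul]
    rw [h1, h2, h3, h4, h5, h6]; ring
  have hSb : ∑ v : V, F b v =
      ((p:ℝ)+(q:ℝ)+4) + ((q:ℝ)+(r:ℝ)+4) + (p:ℝ)*(((q:ℝ)+3)/2)
        + (q:ℝ)*((q:ℝ)+3) + (r:ℝ)*(((q:ℝ)+3)/2) := by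
    rw [hsum]
    have h1 : F b b = 0 := if_pos rfl
    have h2 : F b a = (p:ℝ)+(q:ℝ)+4 := by
      simp only [hF]
      rw [if_neg h.hab.symm, h.dist_T hTb hTa h.hab.symm, hdega, hdegb]; push_cast; norm_num; try ring
    have h3 : F b c = (q:ℝ)+(r:ℝ)+4 := by
      simp only [hF]
      rw [if_neg h.hbc, h.dist_T hTb hTc h.hbc, hdegb, hdegc]; push_cast; norm_num; try ring
    have h4 : ∑ v ∈ B, F b v = (q:ℝ)*((q:ℝ)+3) := by
      have key : ∀ v ∈ B, F b v = (q:ℝ)+3 := by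
        intro v hv
        obtain ⟨hv1, hv2⟩ := (memB v).mp hv
        have hne : b ≠ v := fun h' => hv1 (Or.inr (Or.inl h'.symm))
        simp only [hF]
        rw [if_neg hne, h.dist_T_leaf_own hv1 hv2, h.deg_leaf hv1, hdegb]
        push_cast; norm_num; try ring
      rw [Finset.sum_congr rfl key, Finset.sum_const, ← hq, nsmul_eq_mul]
    have h5 : ∑ v ∈ A, F b v = (p:ℝ)*(((q:ℝ)+3)/2) := by
      have key : ∀ v ∈ A, F b v = ((q:ℝ)+3)/2 := by
        intro v hv
        obtain ⟨hv1, hv2⟩ := (memA v).mp hv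
        have hne : b ≠ v := fun h' => hv1 (Or.inr (Or.inl h'.symm))
        simp only [hF]
        rw [if_neg hne, h.dist_T_leaf_other hTb hv1 (by rw [hv2]; exact h.hab),
          h.deg_leaf hv1, hdegb]
        push_cast; norm_num; try ring
      rw [Finset.sum_congr rfl key, Finset.sum_const, ← hp, nsmul_eq_mul]
    have h6 : ∑ v ∈ C, F b v = (r:ℝ)*(((q:ℝ)+3)/2) := by
      have key : ∀ v ∈ C, F b v = ((q:ℝ)+3)/2 := by
        intro v hv
        obtain ⟨hv1, hv2⟩ := (memC v).mp hv
        have hne : b ≠ v := fun h' => hv1 (Or.inr (Or.inl h'.symm))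
        simp only [hF]
        rw [if_neg hne, h.dist_T_leaf_other hTb hv1 (by rw [hv2]; exact h.hbc.symm),
          h.deg_leaf hv1, hdegb]
        push_cast; norm_num; try ring
      rw [Finset.sum_congr rfl key, Finset.sum_const, ← hr, nsmul_eq_mul]
    rw [h1, h2, h3, h4, h5, h6]; ring
  have hSc : ∑ v : V, F c v =
      ((p:ℝ)+(r:ℝ)+4) + ((q:ℝ)+(r:ℝ)+4) + (p:ℝ)*(((r:ℝ)+3)/2)
        + (q:ℝ)*(((r:ℝ)+3)/2) + (r:ℝ)*((r:ℝ)+3) := by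
    rw [hsum]
    have h1 : F c c = 0 := if_pos rfl
    have h2 : F c a = (p:ℝ)+(r:ℝ)+4 := by
      simp only [hF]
      rw [if_neg h.hac.symm, h.dist_T hTc hTa h.hac.symm, hdega, hdegc]; push_cast; norm_num; try ring
    have h3 : F c b = (q:ℝ)+(r:ℝ)+4 := by
      simp only [hF]
      rw [if_neg h.hbc.symm, h.dist_T hTc hTb h.hbc.symm, hdegb, hdegc]; push_cast; norm_num; try ring
    have h4 : ∑ v ∈ C, F c v = (r:ℝ)*((r:ℝ)+3) := by
      have key : ∀ v ∈ C, F c v = (r:ℝ)+3 := by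
        intro v hv
        obtain ⟨hv1, hv2⟩ := (memC v).mp hv
        have hne : c ≠ v := fun h' => hv1 (Or.inr (Or.inr h'.symm))
        simp only [hF]
        rw [if_neg hne, h.dist_T_leaf_own hv1 hv2, h.deg_leaf hv1, hdegc]
        push_cast; norm_num; try ring
      rw [Finset.sum_congr rfl key, Finset.sum_const, ← hr, nsmul_eq_mul]
    have h5 : ∑ v ∈ A, F c v = (p:ℝ)*(((r:ℝ)+3)/2) := by
      have key : ∀ v ∈ A, F c v = ((r:ℝ)+3)/2 := by
        intro v hv
        obtain ⟨hv1, hv2⟩ := (memA v).mp hv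
        have hne : c ≠ v := fun h' => hv1 (Or.inr (Or.inr h'.symm))
        simp only [hF]
        rw [if_neg hne, h.dist_T_leaf_other hTc hv1 (by rw [hv2]; exact h.hac),
          h.deg_leaf hv1, hdegc]
        push_cast; norm_num; try ring
      rw [Finset.sum_congr rfl key, Finset.sum_const, ← hp, nsmul_eq_mul]
    have h6 : ∑ v ∈ B, F c v = (q:ℝ)*(((r:ℝ)+3)/2) := by
      have key : ∀ v ∈ B, F c v = ((r:ℝ)+3)/2 := by
        intro v hv
        obtain ⟨hv1, hv2⟩ := (memB v).mp hv
        have hne : c ≠ v := fun h' => hv1 (Or.inr (Or.inr h'.symm))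
        simp only [hF]
        rw [if_neg hne, h.dist_T_leaf_other hTc hv1 (by rw [hv2]; exact h.hbc),
          h.deg_leaf hv1, hdegc]
        push_cast; norm_num; try ring
      rw [Finset.sum_congr rfl key, Finset.sum_const, ← hq, nsmul_eq_mul]
    rw [h1, h2, h3, h4, h5, h6]; ring
  -- row sums for leaves
  have leafrow : ∀ (u : V), ¬(u = a ∨ u = b ∨ u = c) →
      ∀ x y z : ℕ, N u = a ∧ x = p ∧ y = q ∧ z = r ∨ N u = b ∧ x = q ∧ y = p ∧ z = r ∨
        N u = c ∧ x = r ∧ y = p ∧ z = q →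
      True := fun _ _ _ _ _ _ => trivial
  have hLA : ∀ u ∈ A, ∑ v : V, F u v =
      ((p:ℝ)+3) + (((q:ℝ)+3)/2 + ((r:ℝ)+3)/2) + (((p:ℝ)-1) + (q:ℝ)*(2/3) + (r:ℝ)*(2/3)) := by
    intro u hu
    obtain ⟨hu1, hu2⟩ := (memA u).mp hu
    rw [hsum]
    have h1 : F u a = (p:ℝ)+3 := by
      have hne : u ≠ a := fun h' => hu1 (Or.inl h')
      simp only [hF]
      rw [if_neg hne, SimpleGraph.dist_comm, h.dist_T_leaf_own hu1 hu2,
        h.deg_leaf hu1, hdega]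
      push_cast; norm_num; try ring
    have h2 : F u b = ((q:ℝ)+3)/2 := by
      have hne : u ≠ b := fun h' => hu1 (Or.inr (Or.inl h'))
      simp only [hF]
      rw [if_neg hne, SimpleGraph.dist_comm,
        h.dist_T_leaf_other hTb hu1 (by rw [hu2]; exact h.hab),
        h.deg_leaf hu1, hdegb]
      push_cast; norm_num; try ring
    have h3 : F u c = ((r:ℝ)+3)/2 := by
      have hne : u ≠ c := fun h' => hu1 (Or.inr (Or.inr h'))
      simp only [hF]
      rw [if_neg hne, SimpleGraph.dist_comm,
        h.dist_T_leaf_other hTc hu1 (by rw [hu2]; exact h.hac),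
        h.deg_leaf hu1, hdegc]
      push_cast; norm_num; try ring
    have h4 : ∑ v ∈ A, F u v = (p:ℝ) - 1 := by
      have key : ∀ v ∈ A, F u v = if v = u then (0:ℝ) else 1 := by
        intro v hv
        obtain ⟨hv1, hv2⟩ := (memA v).mp hv
        by_cases hvu : v = u
        · rw [if_pos hvu, hvu]; exact if_pos rfl
        · rw [if_neg hvu]
          simp only [hF]
          rw [if_neg (fun h' => hvu h'.symm),
            h.dist_leaf_same hu1 hv1 (fun h' => hvu h'.symm) (hu2.trans hv2.symm),
            h.deg_leaf hu1, h.deg_leaf hv1]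
          norm_num
      rw [Finset.sum_congr rfl key]
      have hcalc : ∀ v ∈ A, (if v = u then (0:ℝ) else 1) = 1 - (if v = u then 1 else 0) := by
        intro v _; split <;> ring
      rw [Finset.sum_congr rfl hcalc, Finset.sum_sub_distrib, Finset.sum_const,
        Finset.sum_ite_eq' A u (fun _ => (1:ℝ)), if_pos hu, ← hp, nsmul_eq_mul, mul_one]
    have h5 : ∑ v ∈ B, F u v = (q:ℝ)*(2/3) := by
      have key : ∀ v ∈ B, F u v = (2/3 : ℝ) := by
        intro v hv
        obtain ⟨hv1, hv2⟩ := (memB v).mp hv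
        have hne : u ≠ v := fun h' => h.hab ((hu2.symm.trans (h' ▸ hv2)))
        simp only [hF]
        rw [if_neg hne, h.dist_leaf_diff hu1 hv1 (by rw [hu2, hv2]; exact h.hab),
          h.deg_leaf hu1, h.deg_leaf hv1]
        norm_num
      rw [Finset.sum_congr rfl key, Finset.sum_const, ← hq, nsmul_eq_mul]
    have h6 : ∑ v ∈ C, F u v = (r:ℝ)*(2/3) := by
      have key : ∀ v ∈ C, F u v = (2/3 : ℝ) := by
        intro v hv
        obtain ⟨hv1, hv2⟩ := (memC v).mp hv
        have hne : u ≠ v := fun h' => h.hac ((hu2.symm.trans (h' ▸ hv2)))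
        simp only [hF]
        rw [if_neg hne, h.dist_leaf_diff hu1 hv1 (by rw [hu2, hv2]; exact h.hac),
          h.deg_leaf hu1, h.deg_leaf hv1]
        norm_num
      rw [Finset.sum_congr rfl key, Finset.sum_const, ← hr, nsmul_eq_mul]
    have h7 : F u u = 0 := if_pos rfl
    rw [h1, h2, h3, h4, h5, h6]; ring
  have hLB : ∀ u ∈ B, ∑ v : V, F u v =
      ((q:ℝ)+3) + (((p:ℝ)+3)/2 + ((r:ℝ)+3)/2) + (((q:ℝ)-1) + (p:ℝ)*(2/3) + (r:ℝ)*(2/3)) := by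
    intro u hu
    obtain ⟨hu1, hu2⟩ := (memB u).mp hu
    rw [hsum]
    have h1 : F u b = (q:ℝ)+3 := by
      have hne : u ≠ b := fun h' => hu1 (Or.inr (Or.inl h'))
      simp only [hF]
      rw [if_neg hne, SimpleGraph.dist_comm, h.dist_T_leaf_own hu1 hu2,
        h.deg_leaf hu1, hdegb]
      push_cast; norm_num; try ring
    have h2 : F u a = ((p:ℝ)+3)/2 := by
      have hne : u ≠ a := fun h' => hu1 (Or.inl h')
      simp only [hF]
      rw [if_neg hne, SimpleGraph.dist_comm,
        h.dist_T_leaf_other hTa hu1 (by rw [hu2]; exact h.hab.symm),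
        h.deg_leaf hu1, hdega]
      push_cast; norm_num; try ring
    have h3 : F u c = ((r:ℝ)+3)/2 := by
      have hne : u ≠ c := fun h' => hu1 (Or.inr (Or.inr h'))
      simp only [hF]
      rw [if_neg hne, SimpleGraph.dist_comm,
        h.dist_T_leaf_other hTc hu1 (by rw [hu2]; exact h.hbc),
        h.deg_leaf hu1, hdegc]
      push_cast; norm_num; try ring
    have h4 : ∑ v ∈ B, F u v = (q:ℝ) - 1 := by
      have key : ∀ v ∈ B, F u v = if v = u then (0:ℝ) else 1 := by
        intro v hv
        obtain ⟨hv1, hv2⟩ := (memB v).mp hv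
        by_cases hvu : v = u
        · rw [if_pos hvu, hvu]; exact if_pos rfl
        · rw [if_neg hvu]
          simp only [hF]
          rw [if_neg (fun h' => hvu h'.symm),
            h.dist_leaf_same hu1 hv1 (fun h' => hvu h'.symm) (hu2.trans hv2.symm),
            h.deg_leaf hu1, h.deg_leaf hv1]
          norm_num
      rw [Finset.sum_congr rfl key]
      have hcalc : ∀ v ∈ B, (if v = u then (0:ℝ) else 1) = 1 - (if v = u then 1 else 0) := by
        intro v _; split <;> ring
      rw [Finset.sum_congr rfl hcalc, Finset.sum_sub_distrib, Finset.sum_const,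
        Finset.sum_ite_eq' B u (fun _ => (1:ℝ)), if_pos hu, ← hq, nsmul_eq_mul, mul_one]
    have h5 : ∑ v ∈ A, F u v = (p:ℝ)*(2/3) := by
      have key : ∀ v ∈ A, F u v = (2/3 : ℝ) := by
        intro v hv
        obtain ⟨hv1, hv2⟩ := (memA v).mp hv
        have hne : u ≠ v := fun h' => h.hab (hv2.symm.trans ((h' ▸ hu2 : N v = b)))
        simp only [hF]
        rw [if_neg hne, h.dist_leaf_diff hu1 hv1 (by rw [hu2, hv2]; exact h.hab.symm),
          h.deg_leaf hu1, h.deg_leaf hv1]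
        norm_num
      rw [Finset.sum_congr rfl key, Finset.sum_const, ← hp, nsmul_eq_mul]
    have h6 : ∑ v ∈ C, F u v = (r:ℝ)*(2/3) := by
      have key : ∀ v ∈ C, F u v = (2/3 : ℝ) := by
        intro v hv
        obtain ⟨hv1, hv2⟩ := (memC v).mp hv
        have hne : u ≠ v := fun h' => h.hbc ((hu2.symm.trans (h' ▸ hv2)))
        simp only [hF]
        rw [if_neg hne, h.dist_leaf_diff hu1 hv1 (by rw [hu2, hv2]; exact h.hbc),
          h.deg_leaf hu1, h.deg_leaf hv1]
        norm_num
      rw [Finset.sum_congr rfl key, Finset.sum_const, ← hr, nsmul_eq_mul]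
    rw [h1, h2, h3, h4, h5, h6]; ring
  have hLC : ∀ u ∈ C, ∑ v : V, F u v =
      ((r:ℝ)+3) + (((p:ℝ)+3)/2 + ((q:ℝ)+3)/2) + (((r:ℝ)-1) + (p:ℝ)*(2/3) + (q:ℝ)*(2/3)) := by
    intro u hu
    obtain ⟨hu1, hu2⟩ := (memC u).mp hu
    rw [hsum]
    have h1 : F u c = (r:ℝ)+3 := by
      have hne : u ≠ c := fun h' => hu1 (Or.inr (Or.inr h'))
      simp only [hF]
      rw [if_neg hne, SimpleGraph.dist_comm, h.dist_T_leaf_own hu1 hu2,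
        h.deg_leaf hu1, hdegc]
      push_cast; norm_num; try ring
    have h2 : F u a = ((p:ℝ)+3)/2 := by
      have hne : u ≠ a := fun h' => hu1 (Or.inl h')
      simp only [hF]
      rw [if_neg hne, SimpleGraph.dist_comm,
        h.dist_T_leaf_other hTa hu1 (by rw [hu2]; exact h.hac.symm),
        h.deg_leaf hu1, hdega]
      push_cast; norm_num; try ring
    have h3 : F u b = ((q:ℝ)+3)/2 := by
      have hne : u ≠ b := fun h' => hu1 (Or.inr (Or.inl h'))
      simp only [hF]
      rw [if_neg hne, SimpleGraph.dist_comm,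
        h.dist_T_leaf_other hTb hu1 (by rw [hu2]; exact h.hbc.symm),
        h.deg_leaf hu1, hdegb]
      push_cast; norm_num; try ring
    have h4 : ∑ v ∈ C, F u v = (r:ℝ) - 1 := by
      have key : ∀ v ∈ C, F u v = if v = u then (0:ℝ) else 1 := by
        intro v hv
        obtain ⟨hv1, hv2⟩ := (memC v).mp hv
        by_cases hvu : v = u
        · rw [if_pos hvu, hvu]; exact if_pos rfl
        · rw [if_neg hvu]
          simp only [hF]
          rw [if_neg (fun h' => hvu h'.symm),
            h.dist_leaf_same hu1 hv1 (fun h' => hvu h'.symm) (hu2.trans hv2.symm),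
            h.deg_leaf hu1, h.deg_leaf hv1]
          norm_num
      rw [Finset.sum_congr rfl key]
      have hcalc : ∀ v ∈ C, (if v = u then (0:ℝ) else 1) = 1 - (if v = u then 1 else 0) := by
        intro v _; split <;> ring
      rw [Finset.sum_congr rfl hcalc, Finset.sum_sub_distrib, Finset.sum_const,
        Finset.sum_ite_eq' C u (fun _ => (1:ℝ)), if_pos hu, ← hr, nsmul_eq_mul, mul_one]
    have h5 : ∑ v ∈ A, F u v = (p:ℝ)*(2/3) := by
      have key : ∀ v ∈ A, F u v = (2/3 : ℝ) := by
        intro v hv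
        obtain ⟨hv1, hv2⟩ := (memA v).mp hv
        have hne : u ≠ v := fun h' => h.hac (hv2.symm.trans ((h' ▸ hu2 : N v = c)))
        simp only [hF]
        rw [if_neg hne, h.dist_leaf_diff hu1 hv1 (by rw [hu2, hv2]; exact h.hac.symm),
          h.deg_leaf hu1, h.deg_leaf hv1]
        norm_num
      rw [Finset.sum_congr rfl key, Finset.sum_const, ← hp, nsmul_eq_mul]
    have h6 : ∑ v ∈ B, F u v = (q:ℝ)*(2/3) := by
      have key : ∀ v ∈ B, F u v = (2/3 : ℝ) := by
        intro v hv
        obtain ⟨hv1, hv2⟩ := (memB v).mp hv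
        have hne : u ≠ v := fun h' => h.hbc (hv2.symm.trans ((h' ▸ hu2 : N v = c)))
        simp only [hF]
        rw [if_neg hne, h.dist_leaf_diff hu1 hv1 (by rw [hu2, hv2]; exact h.hbc.symm),
          h.deg_leaf hu1, h.deg_leaf hv1]
        norm_num
      rw [Finset.sum_congr rfl key, Finset.sum_const, ← hq, nsmul_eq_mul]
    rw [h1, h2, h3, h4, h5, h6]; ring
  -- assemble
  rw [hHA, hsum (fun u => ∑ v : V, F u v)]
  rw [hSa, hSb, hSc, Finset.sum_congr rfl hLA, Finset.sum_congr rfl hLB,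
    Finset.sum_congr rfl hLC, Finset.sum_const, Finset.sum_const, Finset.sum_const,
    ← hp, ← hq, ← hr, nsmul_eq_mul, nsmul_eq_mul, nsmul_eq_mul]
  ring

end CS3Aux
namespace CS3Aux

lemma finval (n : ℕ) [NeZero n] (hn : 3 ≤ n) :
    ((0:Fin n):ℕ) = 0 ∧ ((1:Fin n):ℕ) = 1 ∧ ((2:Fin n):ℕ) = 2 := by
  have h2 : ((2:Fin n):ℕ) = 2 % n := Fin.val_ofNat n 2
  have h1 : ((1:Fin n):ℕ) = 1 % n := Fin.val_ofNat n 1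
  have h0 : ((0:Fin n):ℕ) = 0 % n := Fin.val_ofNat n 0
  rw [Nat.mod_eq_of_lt (by omega)] at h1 h2
  rw [Nat.zero_mod] at h0
  exact ⟨h0, h1, h2⟩

lemma fin_memT (n : ℕ) [NeZero n] (hn : 3 ≤ n) (w : Fin n) :
    (w = 0 ∨ w = 1 ∨ w = 2) ↔ (w:ℕ) < 3 := by
  obtain ⟨e0, e1, e2⟩ := finval n hn
  rw [Fin.ext_iff, Fin.ext_iff, Fin.ext_iff, e0, e1, e2]
  omega

lemma csData (n : ℕ) [NeZero n] (hn : 3 ≤ n) :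
    Data (cycleStar3 n) (0 : Fin n) 1 2 (fun _ => (0 : Fin n)) := by
  obtain ⟨e0, e1, e2⟩ := finval n hn
  have hmem := fin_memT n hn
  refine ⟨?_, ?_, ?_, ?_, ?_⟩
  · rw [Ne, Fin.ext_iff, e0, e1]; omega
  · rw [Ne, Fin.ext_iff, e0, e2]; omega
  · rw [Ne, Fin.ext_iff, e1, e2]; omega
  · intro v _; left; rfl
  · intro u v
    rw [cycleStar3, SimpleGraph.fromRel_adj]
    rw [hmem u, hmem v]
    simp only [Ne, Fin.ext_iff, e0]
    omega

lemma csCards (n : ℕ) [NeZero n] (hn : 3 ≤ n) :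
    n - 3 = Nat.card {v : Fin n // ¬(v = 0 ∨ v = 1 ∨ v = 2) ∧ (0:Fin n) = 0}
    ∧ 0 = Nat.card {v : Fin n // ¬(v = 0 ∨ v = 1 ∨ v = 2) ∧ (0:Fin n) = 1}
    ∧ 0 = Nat.card {v : Fin n // ¬(v = 0 ∨ v = 1 ∨ v = 2) ∧ (0:Fin n) = 2} := by
  rw [natcard_eq, natcard_eq, natcard_eq]
  obtain ⟨e0, e1, e2⟩ := finval n hn
  have hne01 : (0:Fin n) ≠ 1 := by rw [Ne, Fin.ext_iff, e0, e1]; omega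
  have hne02 : (0:Fin n) ≠ 2 := by rw [Ne, Fin.ext_iff, e0, e2]; omega
  have hne12 : (1:Fin n) ≠ 2 := by rw [Ne, Fin.ext_iff, e1, e2]; omega
  refine ⟨?_, ?_, ?_⟩
  · have h1 : (Finset.univ.filter
        (fun v : Fin n => ¬(v = 0 ∨ v = 1 ∨ v = 2) ∧ (0:Fin n) = 0))
        = Finset.univ \ ({0, 1, 2} : Finset (Fin n)) := by
      ext w
      simp only [Finset.mem_filter, Finset.mem_univ, true_and, Finset.mem_sdiff,
        Finset.mem_insert, Finset.mem_singleton]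
      tauto
    rw [h1, Finset.card_sdiff_of_subset (Finset.subset_univ _), Finset.card_univ, Fintype.card_fin]
    have h2 : ({0, 1, 2} : Finset (Fin n)).card = 3 := by
      rw [Finset.card_insert_of_notMem (by simp [hne01, hne02]),
        Finset.card_insert_of_notMem (by simp [hne12]), Finset.card_singleton]
    rw [h2]
  · symm
    rw [Finset.card_eq_zero, Finset.filter_eq_empty_iff]
    intro w _
    rintro ⟨-, h'⟩
    exact hne01 h'
  · symm
    rw [Finset.card_eq_zero, Finset.filter_eq_empty_iff]
    intro w _
    rintro ⟨-, h'⟩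
    exact hne02 h'

lemma Data.card_sum {V : Type*} [Fintype V] {G : SimpleGraph V} {a b c : V} {N : V → V}
    (h : Data G a b c N) :
    Nat.card {v : V // ¬(v = a ∨ v = b ∨ v = c) ∧ N v = a}
      + Nat.card {v : V // ¬(v = a ∨ v = b ∨ v = c) ∧ N v = b}
      + Nat.card {v : V // ¬(v = a ∨ v = b ∨ v = c) ∧ N v = c}
      = Fintype.card V - 3 := by
  rw [natcard_eq, natcard_eq, natcard_eq]
  set A := Finset.univ.filter (fun v => ¬(v = a ∨ v = b ∨ v = c) ∧ N v = a) with hA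
  set B := Finset.univ.filter (fun v => ¬(v = a ∨ v = b ∨ v = c) ∧ N v = b) with hB
  set C := Finset.univ.filter (fun v => ¬(v = a ∨ v = b ∨ v = c) ∧ N v = c) with hC
  have hdAB : Disjoint A B := by
    rw [Finset.disjoint_left]
    intro v hv hv'
    rw [hA, Finset.mem_filter] at hv; rw [hB, Finset.mem_filter] at hv'
    exact h.hab (hv.2.2 ▸ hv'.2.2 ▸ rfl)
  have hdAC : Disjoint A C := by
    rw [Finset.disjoint_left]
    intro v hv hv'
    rw [hA, Finset.mem_filter] at hv; rw [hC, Finset.mem_filter] at hv'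
    exact h.hac (hv.2.2 ▸ hv'.2.2 ▸ rfl)
  have hdBC : Disjoint B C := by
    rw [Finset.disjoint_left]
    intro v hv hv'
    rw [hB, Finset.mem_filter] at hv; rw [hC, Finset.mem_filter] at hv'
    exact h.hbc (hv.2.2 ▸ hv'.2.2 ▸ rfl)
  have hunion : A ∪ B ∪ C = Finset.univ \ ({a, b, c} : Finset V) := by
    ext v
    simp only [Finset.mem_union, Finset.mem_sdiff, Finset.mem_univ, true_and,
      Finset.mem_insert, Finset.mem_singleton, hA, hB, hC, Finset.mem_filter]
    constructor
    · rintro ((⟨h1, -⟩|⟨h1, -⟩)|⟨h1, -⟩) <;> tauto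
    · intro hv
      have hv' : ¬(v = a ∨ v = b ∨ v = c) := by tauto
      rcases h.hNT v hv' with h'|h'|h' <;> tauto
  have hcard : (A ∪ B ∪ C).card = A.card + B.card + C.card := by
    rw [Finset.card_union_of_disjoint (Finset.disjoint_union_left.mpr ⟨hdAC, hdBC⟩),
      Finset.card_union_of_disjoint hdAB]
  have habc : ({a, b, c} : Finset V).card = 3 := by
    rw [Finset.card_insert_of_notMem (by simp [h.hab, h.hac]),
      Finset.card_insert_of_notMem (by simp [h.hbc]), Finset.card_singleton]
  rw [← hcard, hunion, Finset.card_sdiff_of_subset (Finset.subset_univ _), Finset.card_univ, habc]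

lemma Data.three_le_card {V : Type*} [Fintype V] {G : SimpleGraph V} {a b c : V} {N : V → V}
    (h : Data G a b c N) : 3 ≤ Fintype.card V := by
  classical
  have habc : ({a, b, c} : Finset V).card = 3 := by
    rw [Finset.card_insert_of_notMem (by simp [h.hab, h.hac]),
      Finset.card_insert_of_notMem (by simp [h.hbc]), Finset.card_singleton]
  calc 3 = ({a, b, c} : Finset V).card := habc.symm
    _ ≤ Finset.univ.card := Finset.card_le_card (Finset.subset_univ _)
    _ = Fintype.card V := Finset.card_univ

set_option maxHeartbeats 1000000 in
lemma Data.iso_cs {n : ℕ} {G : SimpleGraph (Fin n)} {a b c : Fin n} {N : Fin n → Fin n}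
    (h : Data G a b c N)
    (hall : ∀ v, ¬(v = a ∨ v = b ∨ v = c) → N v = a) :
    Nonempty (G ≃g cycleStar3 n) := by
  have hn : 3 ≤ n := by simpa using h.three_le_card
  haveI : NeZero n := ⟨by omega⟩
  obtain ⟨e0, e1, e2⟩ := finval n hn
  have hne01 : (0:Fin n) ≠ 1 := by rw [Ne, Fin.ext_iff, e0, e1]; omega
  have hne02 : (0:Fin n) ≠ 2 := by rw [Ne, Fin.ext_iff, e0, e2]; omega
  have hne12 : (1:Fin n) ≠ 2 := by rw [Ne, Fin.ext_iff, e1, e2]; omega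
  set s1 := Equiv.swap a (0 : Fin n) with hs1
  have hs1a : s1 a = 0 := Equiv.swap_apply_left a 0
  have hb1 : s1 b ≠ 0 := fun h' => h.hab (s1.injective (hs1a.trans h'.symm))
  set s2 := Equiv.swap (s1 b) (1 : Fin n) with hs2
  have hs2b : s2 (s1 b) = 1 := Equiv.swap_apply_left _ _
  have hs20 : s2 0 = 0 := Equiv.swap_apply_of_ne_of_ne (Ne.symm hb1) hne01
  have hc1ne0 : s1 c ≠ 0 := fun h' => h.hac (s1.injective (hs1a.trans h'.symm))
  have hc1neb1 : s1 c ≠ s1 b := fun h' => h.hbc (s1.injective h').symm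
  set s3 := Equiv.swap (s2 (s1 c)) (2 : Fin n) with hs3
  have hs3c : s3 (s2 (s1 c)) = 2 := Equiv.swap_apply_left _ _
  have hc2ne1 : s2 (s1 c) ≠ 1 := fun h' => hc1neb1 (s2.injective (h'.trans hs2b.symm))
  have hc2ne0 : s2 (s1 c) ≠ 0 := fun h' => hc1ne0 (s2.injective (h'.trans hs20.symm))
  have hs30 : s3 0 = 0 := Equiv.swap_apply_of_ne_of_ne (Ne.symm hc2ne0) hne02
  have hs31 : s3 1 = 1 := Equiv.swap_apply_of_ne_of_ne (Ne.symm hc2ne1) hne12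
  set e : Fin n ≃ Fin n := (s1.trans s2).trans s3 with he
  have heval : ∀ w, e w = s3 (s2 (s1 w)) := fun w => rfl
  have hea : e a = 0 := by rw [heval, hs1a, hs20, hs30]
  have heb : e b = 1 := by rw [heval, hs2b, hs31]
  have hec : e c = 2 := by rw [heval, hs3c]
  have h0iff : ∀ w, e w = 0 ↔ w = a :=
    fun w => ⟨fun h' => e.injective (h'.trans hea.symm), fun h' => h' ▸ hea⟩
  have h1iff : ∀ w, e w = 1 ↔ w = b :=
    fun w => ⟨fun h' => e.injective (h'.trans heb.symm), fun h' => h' ▸ heb⟩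
  have h2iff : ∀ w, e w = 2 ↔ w = c :=
    fun w => ⟨fun h' => e.injective (h'.trans hec.symm), fun h' => h' ▸ hec⟩
  have hneiff : ∀ u v : Fin n, e u ≠ e v ↔ u ≠ v :=
    fun u v => ⟨fun h' hx => h' (hx ▸ rfl), fun h' hx => h' (e.injective hx)⟩
  refine ⟨⟨e, ?_⟩⟩
  intro u v
  show (cycleStar3 n).Adj (e u) (e v) ↔ G.Adj u v
  rw [(csData n hn).hadj, h.hadj]
  beta_reduce
  rw [h0iff u, h1iff u, h2iff u, h0iff v, h1iff v, h2iff v, hneiff]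
  constructor
  · rintro (h'|⟨h1', h2'⟩|⟨h1', h2'⟩)
    · exact Or.inl h'
    · exact Or.inr (Or.inl ⟨h1', h2'.trans (hall u h1').symm⟩)
    · exact Or.inr (Or.inr ⟨h1', h2'.trans (hall v h1').symm⟩)
  · rintro (h'|⟨h1', h2'⟩|⟨h1', h2'⟩)
    · exact Or.inl h'
    · exact Or.inr (Or.inl ⟨h1', h2'.trans (hall u h1')⟩)
    · exact Or.inr (Or.inr ⟨h1', h2'.trans (hall v h1')⟩)

end CS3Aux
namespace CS3Aux

lemma card_onCycle {V : Type*} [Fintype V] (G : SimpleGraph V) :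
    Nat.card {v // OnCycle G v} = (Finset.univ.filter (fun v => OnCycle G v)).card := by
  rw [Nat.card_eq_fintype_card]
  convert Fintype.card_subtype _

lemma extract {n : ℕ} (G : SimpleGraph (Fin n)) (hG : IsCycleStar G)
    (hc : cycleLength G = 3) : ∃ a b c N, Data G a b c N := by
  obtain ⟨⟨hconn, -⟩, hstar⟩ := hG
  rw [cycleLength] at hc
  -- a vertex on a cycle
  have hpos : Nonempty {v // OnCycle G v} := by
    have : 0 < Nat.card {v // OnCycle G v} := by omega
    exact (Nat.card_pos_iff.mp this).1
  obtain ⟨⟨a, pa, hpa⟩⟩ := hpos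
  set Ofin := Finset.univ.filter (fun v => OnCycle G v) with hOfin
  have hOcard : Ofin.card = 3 := by rw [← hc, card_onCycle]
  have hsupO : ∀ u ∈ pa.support, OnCycle G u := fun u hu => ⟨pa.rotate u hu, hpa.rotate hu⟩
  have hlen3 : pa.length = 3 := by
    have h1 : 3 ≤ pa.length := hpa.three_le_length
    have hnd : pa.support.tail.Nodup := hpa.support_nodup
    have hlen : pa.support.tail.length = pa.length := by
      have := pa.length_support
      have := List.length_tail (l := pa.support)
      omega
    have hsub : pa.support.tail.toFinset ⊆ Ofin := by
      intro u hu
      rw [List.mem_toFinset] at hu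
      exact Finset.mem_filter.mpr ⟨Finset.mem_univ _, hsupO u (List.mem_of_mem_tail hu)⟩
    have h2 := Finset.card_le_card hsub
    rw [List.toFinset_card_of_nodup hnd, hlen, hOcard] at h2
    omega
  -- destruct the cycle walk of length 3
  cases pa with
  | nil => simp at hlen3
  | cons h1 q =>
    cases q with
    | nil => simp at hlen3
    | cons h2 q2 =>
      cases q2 with
      | nil => simp at hlen3
      | cons h3 q3 =>
        cases q3 with
        | cons h4 q4 => simp [SimpleGraph.Walk.length_cons] at hlen3
        | nil =>
          rename_i b c
          -- h1 : G.Adj a b, h2 : G.Adj b c, h3 : G.Adj c a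
          have hnd := hpa.support_nodup
          simp only [SimpleGraph.Walk.support_cons, SimpleGraph.Walk.support_nil,
            List.tail_cons, List.nodup_cons, List.mem_cons, List.mem_singleton,
            List.not_mem_nil, or_false, List.nodup_nil, and_true,
            List.mem_singleton] at hnd
          push_neg at hnd
          obtain ⟨⟨hbc, hba⟩, hca, -⟩ := hnd
          -- OnCycle set equals {a, b, c}
          have hsupmem : ∀ u, u = a ∨ u = b ∨ u = c →
              u ∈ (SimpleGraph.Walk.cons h1 (SimpleGraph.Walk.cons h2
                (SimpleGraph.Walk.cons h3 SimpleGraph.Walk.nil))).support := by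
            intro u hu
            simp only [SimpleGraph.Walk.support_cons, SimpleGraph.Walk.support_nil,
              List.mem_cons, List.mem_singleton]
            tauto
          have hOeq : ∀ u, OnCycle G u ↔ (u = a ∨ u = b ∨ u = c) := by
            have hsub : ({a, b, c} : Finset (Fin n)) ⊆ Ofin := by
              intro u hu
              simp only [Finset.mem_insert, Finset.mem_singleton] at hu
              exact Finset.mem_filter.mpr ⟨Finset.mem_univ _, hsupO u (hsupmem u hu)⟩
            have hcard3 : ({a, b, c} : Finset (Fin n)).card = 3 := by
              rw [Finset.card_insert_of_notMem (by
                  simp only [Finset.mem_insert, Finset.mem_singleton]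
                  rintro (rfl|rfl); exacts [hba rfl, hca rfl]),
                Finset.card_insert_of_notMem (by
                  simp only [Finset.mem_singleton]
                  exact hbc), Finset.card_singleton]
            have heq : ({a, b, c} : Finset (Fin n)) = Ofin :=
              Finset.eq_of_subset_of_card_le hsub (by rw [hOcard, hcard3])
            intro u
            constructor
            · intro h'
              have : u ∈ Ofin := Finset.mem_filter.mpr ⟨Finset.mem_univ _, h'⟩
              rw [← heq] at this
              simpa using this
            · intro h'
              have : u ∈ ({a, b, c} : Finset (Fin n)) := by simpa using h'
              rw [heq] at this
              exact (Finset.mem_filter.mp this).2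
          -- unique neighbor for leaves
          have hleaf : ∀ u, ∃ w, ¬(u = a ∨ u = b ∨ u = c) →
              (G.Adj u w ∧ ∀ x, G.Adj u x → x = w) := by
            intro u
            by_cases hu : u = a ∨ u = b ∨ u = c
            · exact ⟨u, fun h' => absurd hu h'⟩
            · have hno : ¬ OnCycle G u := fun h' => hu ((hOeq u).mp h')
              have hle : deg G u ≤ 1 := by
                by_contra h'
                push_neg at h'
                exact hno (hstar u h')
              have hge : 1 ≤ deg G u := by
                have hua : u ≠ a := fun h' => hu (Or.inl h')
                obtain ⟨pw⟩ := hconn.preconnected u a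
                cases pw with
                | nil => exact absurd rfl hua
                | cons h' q =>
                  have hne : Nonempty {w // G.Adj u w} := ⟨⟨_, h'⟩⟩
                  rw [deg]
                  have : Nat.card {w // G.Adj u w} ≠ 0 := by
                    simp only [Nat.card_ne_zero]
                    exact ⟨hne, Finite.of_injective (fun x => x.1) (fun x y hxy => Subtype.ext hxy)⟩
                  omega
              have heq1 : Nat.card {w // G.Adj u w} = 1 := le_antisymm hle hge
              rw [Nat.card_eq_one_iff_unique] at heq1
              obtain ⟨hsub, ⟨⟨w, hw⟩⟩⟩ := heq1
              refine ⟨w, fun _ => ⟨hw, fun x hx => ?_⟩⟩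
              have := hsub.elim ⟨x, hx⟩ ⟨w, hw⟩
              exact congrArg Subtype.val this
          choose N hN using hleaf
          -- leaves attach to the triangle
          have hNT : ∀ v, ¬(v = a ∨ v = b ∨ v = c) → (N v = a ∨ N v = b ∨ N v = c) := by
            intro v hv
            by_contra hNv
            obtain ⟨hadjvN, huniq_v⟩ := hN v hv
            obtain ⟨hadjNN, huniq_N⟩ := hN (N v) hNv
            have hNNv : N (N v) = v := (huniq_N v hadjvN.symm).symm
            have hva : v ≠ a := fun h' => hv (Or.inl h')
            obtain ⟨pr, hpr, -⟩ :=
              SimpleGraph.Reachable.exists_path_of_dist (hconn.preconnected v a)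
            cases pr with
            | nil => exact hva rfl
            | cons h1' q =>
              rename_i w1
              have hw1 : w1 = N v := huniq_v w1 h1'
              subst hw1
              cases q with
              | nil => exact hNv (Or.inl rfl)
              | cons h2' q2 =>
                rename_i w2
                have hw2 : w2 = N (N v) := huniq_N w2 h2'
                rw [hNNv] at hw2
                subst hw2
                have hnd' := hpr.support_nodup
                simp only [SimpleGraph.Walk.support_cons, List.nodup_cons,
                  List.mem_cons] at hnd'
                exact hnd'.1 (Or.inr q2.start_mem_support)
          -- adjacency characterization
          refine ⟨a, b, c, N, ⟨hba.symm, hca.symm, hbc, hNT, fun u v => ?_⟩⟩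
          constructor
          · intro huv
            by_cases hu : u = a ∨ u = b ∨ u = c
            · by_cases hv : v = a ∨ v = b ∨ v = c
              · exact Or.inl ⟨hu, hv, G.ne_of_adj huv⟩
              · exact Or.inr (Or.inr ⟨hv, (hN v hv).2 u huv.symm⟩)
            · exact Or.inr (Or.inl ⟨hu, (hN u hu).2 v huv⟩)
          · rintro (⟨hu, hv, huv⟩|⟨hu, rfl⟩|⟨hv, rfl⟩)
            · rcases hu with rfl|rfl|rfl <;> rcases hv with rfl|rfl|rfl <;>
                first
                  | exact absurd rfl huv
                  | exact h1 | exact h1.symm | exact h2 | exact h2.symm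
                  | exact h3 | exact h3.symm
            · exact (hN u hu).1
            · exact ((hN v hv).1).symm

end CS3Aux
theorem stmt14 (n : ℕ) (G : SimpleGraph (Fin n)) (hG : IsCycleStar G)
    (hc : cycleLength G = 3) (hne : ¬ Nonempty (G ≃g cycleStar3 n)) :
    HA G < HA (cycleStar3 n) := by
  obtain ⟨a, b, c, N, h⟩ := CS3Aux.extract G hG hc
  have hn : 3 ≤ n := by simpa using h.three_le_card
  haveI : NeZero n := ⟨by omega⟩
  set p := Nat.card {v : Fin n // ¬(v = a ∨ v = b ∨ v = c) ∧ N v = a} with hp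
  set q := Nat.card {v : Fin n // ¬(v = a ∨ v = b ∨ v = c) ∧ N v = b} with hq
  set r := Nat.card {v : Fin n // ¬(v = a ∨ v = b ∨ v = c) ∧ N v = c} with hr
  have hGf := h.HA_formula p q r hp hq hr
  obtain ⟨h1, h2, h3⟩ := CS3Aux.csCards n hn
  have hcsf := (CS3Aux.csData n hn).HA_formula (n - 3) 0 0 h1 h2 h3
  have hpqr : p + q + r = n - 3 := by
    have := h.card_sum
    rw [← hp, ← hq, ← hr, Fintype.card_fin] at this
    exact this
  have hemp : ∀ x : Fin n,
      Nat.card {v : Fin n // ¬(v = a ∨ v = b ∨ v = c) ∧ N v = x} = 0 →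
      ∀ v, ¬(v = a ∨ v = b ∨ v = c) → N v ≠ x := by
    intro x hx v hv hNx
    rcases Nat.card_eq_zero.mp hx with h'|h'
    · exact h'.elim ⟨v, hv, hNx⟩
    · exact absurd h' (not_infinite_iff_finite.mpr inferInstance)
  by_cases hS : p * q + q * r + r * p = 0
  · exfalso
    apply hne
    have hab0 : p * q = 0 := by omega
    have hbc0 : q * r = 0 := by omega
    have hca0 : r * p = 0 := by omega
    have key : (q = 0 ∧ r = 0) ∨ (r = 0 ∧ p = 0) ∨ (p = 0 ∧ q = 0) := by
      rcases Nat.mul_eq_zero.mp hab0 with h'|h'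
      · rcases Nat.mul_eq_zero.mp hbc0 with h''|h''
        · exact Or.inr (Or.inr ⟨h', h''⟩)
        · exact Or.inr (Or.inl ⟨h'', h'⟩)
      · rcases Nat.mul_eq_zero.mp hca0 with h''|h''
        · exact Or.inl ⟨h', h''⟩
        · exact Or.inr (Or.inr ⟨h'', h'⟩)
    rcases key with ⟨hz1, hz2⟩|⟨hz1, hz2⟩|⟨hz1, hz2⟩
    · refine h.iso_cs (fun v hv => ?_)
      rcases h.hNT v hv with h'|h'|h'
      · exact h'
      · exact absurd h' (hemp b (hq ▸ hz1) v hv)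
      · exact absurd h' (hemp c (hr ▸ hz2) v hv)
    · refine h.rot.iso_cs (fun v hv => ?_)
      have hv' : ¬(v = a ∨ v = b ∨ v = c) := by tauto
      rcases h.hNT v hv' with h'|h'|h'
      · exact absurd h' (hemp a (hp ▸ hz2) v hv')
      · exact h'
      · exact absurd h' (hemp c (hr ▸ hz1) v hv')
    · refine h.rot.rot.iso_cs (fun v hv => ?_)
      have hv' : ¬(v = a ∨ v = b ∨ v = c) := by tauto
      rcases h.hNT v hv' with h'|h'|h'
      · exact absurd h' (hemp a (hp ▸ hz1) v hv')
      · exact absurd h' (hemp b (hq ▸ hz2) v hv')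
      · exact h'
  · have hge1 : 1 ≤ p * q + q * r + r * p := Nat.one_le_iff_ne_zero.mpr hS
    have hC : (p:ℝ) + q + r = ((n - 3 : ℕ) : ℝ) := by exact_mod_cast congrArg Nat.cast hpqr
    have hS' : (1:ℝ) ≤ (p:ℝ) * q + (q:ℝ) * r + (r:ℝ) * p := by exact_mod_cast hge1
    rw [hGf, hcsf, ← hC]
    push_cast
    nlinarith [hS']
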